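/- arXiv:1301.6807 — 4 statements merged into one kernel-verified Lean document; each statement's English description precedes it below -/
import Mathlib

section
/- For every i and every pair of consecutive entries p, q (in that order) of the i-th Stern-Brocot half-sequence SB i, the cross-determinant equals 1, i.e. den(p)·num(q) − num(p)·den(q) = 1. -/
/-- The mediant of two rationals `p` and `q`: `(num p + num q) / (den p + den q)`. -/
def mediant (p q : ℚ) : ℚ := ((p.num + q.num : ℤ) : ℚ) / ((p.den + q.den : ℕ) : ℚ)

/-- Insert between every pair of consecutive entries of a list their mediant. -/
def insertMediants : List ℚ → List ℚ
  | [] => []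
  | [p] => [p]
  | p :: q :: rest => p :: mediant p q :: insertMediants (q :: rest)

/-- The Stern-Brocot half-sequences: `SB 0 = [0/1, 1/1]`, and each successive
sequence is obtained by inserting mediants between consecutive entries. -/
def SB : ℕ → List ℚ
  | 0 => [0, 1]
  | i + 1 => insertMediants (SB i)

def Det (p q : ℚ) : Prop :=
  (p.den : ℤ) * q.num - p.num * (q.den : ℤ) = 1

lemma mediant_num_den {p q : ℚ} (h : Det p q) :
    (mediant p q).num = p.num + q.num ∧ ((mediant p q).den : ℤ) = (p.den : ℤ) + q.den := by
  have hb0 : (0 : ℤ) < ((p.den + q.den : ℕ) : ℤ) := by positivity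
  have hcop : IsCoprime (p.num + q.num) ((p.den + q.den : ℕ) : ℤ) := by
    refine ⟨(p.den : ℤ), -p.num, ?_⟩
    push_cast
    unfold Det at h
    linarith
  have hcop' : Nat.Coprime (p.num + q.num).natAbs ((p.den + q.den : ℕ) : ℤ).natAbs :=
    Int.isCoprime_iff_gcd_eq_one.mp hcop
  have hnum := Rat.num_div_eq_of_coprime hb0 hcop'
  have hden := Rat.den_div_eq_of_coprime hb0 hcop'
  constructor
  · simpa [mediant] using hnum
  · simpa [mediant] using hden

lemma det_mediant_left {p q : ℚ} (h : Det p q) : Det p (mediant p q) := by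
  obtain ⟨hn, hd⟩ := mediant_num_den h
  unfold Det at h ⊢
  rw [hn, hd]; linarith

lemma det_mediant_right {p q : ℚ} (h : Det p q) : Det (mediant p q) q := by
  obtain ⟨hn, hd⟩ := mediant_num_den h
  unfold Det at h ⊢
  rw [hn, hd]; linarith

lemma chain_insertMediants : ∀ {l : List ℚ}, l.Chain' Det → (insertMediants l).Chain' Det
  | [], _ => by simp [insertMediants, List.Chain']
  | [p], _ => by simp [insertMediants, List.Chain']
  | p :: q :: rest, h => by
    rw [List.Chain', List.isChain_cons_cons] at h
    obtain ⟨hpq, hrest⟩ := h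
    have ih := chain_insertMediants hrest
    have : insertMediants (q :: rest) = q :: (insertMediants (q :: rest)).tail := by
      cases rest <;> rfl
    rw [insertMediants, List.Chain', List.isChain_cons_cons]
    refine ⟨det_mediant_left hpq, ?_⟩
    rw [this] at ih ⊢
    exact List.isChain_cons_cons.mpr ⟨det_mediant_right hpq, ih⟩

lemma chain_SB (i : ℕ) : (SB i).Chain' Det := by
  induction i with
  | zero => simp [SB, Det, List.Chain', List.isChain_cons_cons]
  | succ n ih => exact chain_insertMediants ih

/-- For every pair of consecutive entries `p, q` of the `i`-th Stern-Brocot half-sequence,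
the cross-determinant `den p * num q - num p * den q` equals `1`. -/
theorem sternBrocot_crossDeterminant_eq_one (i j : ℕ) (hj : j + 1 < (SB i).length) :
    ((SB i)[j].den : ℤ) * (SB i)[j + 1].num - (SB i)[j].num * ((SB i)[j + 1].den : ℤ) = 1 := by
  have := List.isChain_iff_getElem.mp (chain_SB i) j (by omega)
  simpa [Det, List.get_eq_getElem] using this
end

section
/- The Stern-Brocot half-sequences are algebraically symmetric: for every i and every index j with 0 ≤ j ≤ 2^i, the j-th entry and the (2^i − j)-th entry of SB i add up to 1, i.e. SB i [j] + SB i [2^i − j] = 1. -/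
lemma num_one_sub (x : ℚ) : (1 - x).num = (x.den : ℤ) - x.num ∧ (1 - x).den = x.den := by
  have hd : (0:ℤ) < (x.den : ℤ) := by exact_mod_cast x.pos
  have hcop : Nat.Coprime ((x.den : ℤ) - x.num).natAbs (x.den : ℤ).natAbs := by
    have h1 : IsCoprime (x.num : ℤ) (x.den : ℤ) :=
      Int.isCoprime_iff_gcd_eq_one.mpr x.reduced
    have h2 : IsCoprime ((x.den : ℤ) - x.num) (x.den : ℤ) := by
      have := h1.neg_left.add_mul_left_left 1
      simpa [sub_eq_neg_add] using this
    exact Int.isCoprime_iff_gcd_eq_one.mp h2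
  have hx : (1 - x) = (((x.den : ℤ) - x.num : ℤ) : ℚ) / ((x.den : ℤ) : ℚ) := by
    have hd0 : ((x.den : ℚ)) ≠ 0 := by positivity
    field_simp
    nth_rewrite 1 [← Rat.num_div_den x]
    field_simp
    rw [Int.cast_sub, Int.cast_natCast]; ring
  constructor
  · rw [hx]; exact Rat.num_div_eq_of_coprime hd hcop
  · rw [hx]
    have := Rat.den_div_eq_of_coprime hd hcop
    exact_mod_cast this

lemma mediant_symm (a b : ℚ) : mediant a b + mediant (1 - b) (1 - a) = 1 := by
  obtain ⟨hn1, hd1⟩ := num_one_sub a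
  obtain ⟨hn2, hd2⟩ := num_one_sub b
  unfold mediant
  rw [hn1, hd1, hn2, hd2]
  have ha : (0:ℚ) < (a.den : ℚ) + (b.den : ℚ) := by
    have := a.pos; have := b.pos; positivity
  push_cast
  field_simp
  ring

lemma im_length (l : List ℚ) (h : l ≠ []) :
    (insertMediants l).length = 2 * l.length - 1 := by
  match l with
  | [p] => simp [insertMediants]
  | p :: q :: rest =>
    have := im_length (q :: rest) (by simp)
    simp only [insertMediants, List.length_cons] at *
    omega

lemma SB_length (i : ℕ) : (SB i).length = 2 ^ i + 1 := by
  induction i with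
  | zero => simp [SB]
  | succ n ih =>
    have hne : SB n ≠ [] := by
      intro h; rw [h] at ih; simp at ih
    show (insertMediants (SB n)).length = _
    rw [im_length _ hne, ih, pow_succ]
    omega

lemma im_get_even (l : List ℚ) (k : ℕ) :
    (insertMediants l).getD (2 * k) 0 = l.getD k 0 := by
  match l with
  | [] => simp [insertMediants]
  | [p] =>
    match k with
    | 0 => simp [insertMediants]
    | k + 1 =>
      show ([p] : List ℚ).getD (2 * (k+1)) 0 = ([p] : List ℚ).getD (k+1) 0
      rw [List.getD_eq_default _ _ (by simp; omega), List.getD_eq_default _ _ (by simp)]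
  | p :: q :: rest =>
    match k with
    | 0 => simp [insertMediants]
    | k + 1 =>
      have := im_get_even (q :: rest) k
      simp only [insertMediants]
      have h2 : 2 * (k + 1) = (2 * k + 1) + 1 := by ring
      rw [h2]
      simpa using this

lemma im_get_odd (l : List ℚ) (k : ℕ) (h : k + 1 < l.length) :
    (insertMediants l).getD (2 * k + 1) 0 = mediant (l.getD k 0) (l.getD (k + 1) 0) := by
  match l with
  | [] => simp at h
  | [p] => simp at h
  | p :: q :: rest =>
    match k with
    | 0 => simp [insertMediants]
    | k + 1 =>
      have h' : k + 1 < (q :: rest).length := by simpa using Nat.lt_of_succ_lt_succ h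
      have := im_get_odd (q :: rest) k h'
      simp only [insertMediants]
      have h2 : 2 * (k + 1) + 1 = (2 * k + 1 + 1) + 1 := by ring
      rw [h2]
      simpa using this

/-- Stern-Brocot half-sequences are algebraically symmetric: for `0 ≤ j ≤ 2 ^ i`,
the `j`-th entry and the `(2 ^ i - j)`-th entry of `SB i` add up to `1`. -/
theorem sternBrocot_symmetric (i j : ℕ) (hj : j ≤ 2 ^ i) :
    (SB i).getD j 0 + (SB i).getD (2 ^ i - j) 0 = 1 := by
  induction i generalizing j with
  | zero =>
    interval_cases j <;> norm_num [SB]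
  | succ n ih =>
    show (insertMediants (SB n)).getD j 0 + (insertMediants (SB n)).getD (2 ^ (n+1) - j) 0 = 1
    rcases Nat.even_or_odd j with ⟨k, hk⟩ | ⟨k, hk⟩
    · -- j = 2k
      subst hk
      have hk2 : k ≤ 2 ^ n := by
        have : 2 ^ (n+1) = 2 * 2 ^ n := by ring
        omega
      have he : 2 ^ (n+1) - (k + k) = 2 * (2 ^ n - k) := by
        have : 2 ^ (n+1) = 2 * 2 ^ n := by ring
        omega
      rw [he, show k + k = 2 * k by ring, im_get_even, im_get_even]
      exact ih k hk2
    · -- j = 2k + 1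
      subst hk
      have hpow : 2 ^ (n+1) = 2 * 2 ^ n := by ring
      have hk2 : k < 2 ^ n := by omega
      have hlen : (SB n).length = 2 ^ n + 1 := SB_length n
      have he : 2 ^ (n+1) - (2 * k + 1) = 2 * (2 ^ n - k - 1) + 1 := by omega
      rw [he, im_get_odd _ _ (by omega), im_get_odd _ _ (by omega)]
      have h1 := ih (k + 1) (by omega)
      have h2 := ih k (by omega)
      have e1 : 2 ^ n - (k + 1) = 2 ^ n - k - 1 := by omega
      have e2 : 2 ^ n - k - 1 + 1 = 2 ^ n - k := by omega
      rw [e1] at h1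
      rw [e2]
      have hc : (SB n).getD (2 ^ n - k - 1) 0 = 1 - (SB n).getD (k + 1) 0 := by linarith
      have hd : (SB n).getD (2 ^ n - k) 0 = 1 - (SB n).getD k 0 := by linarith
      rw [hc, hd]
      exact mediant_symm _ _
end

section
/- Every rational number q with 0 ≤ q ≤ 1 appears as an entry of the i-th Stern-Brocot half-sequence SB i for some i (and hence in every subsequent one). -/
/-- Adjacency (unimodularity) of two rationals. -/
def Adj (a b : ℚ) : Prop := b.num * a.den - a.num * b.den = 1

/-- Consecutive pairs of a list. -/
def pairs (l : List ℚ) : List (ℚ × ℚ) := l.zip l.tail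

lemma pairs_cons_cons (p q : ℚ) (rest : List ℚ) :
    pairs (p :: q :: rest) = (p, q) :: pairs (q :: rest) := rfl

lemma mem_of_pairs {l : List ℚ} {a b : ℚ} (h : (a, b) ∈ pairs l) : a ∈ l ∧ b ∈ l := by
  induction l with
  | nil => simp [pairs] at h
  | cons p t ih =>
    cases t with
    | nil => simp [pairs] at h
    | cons q rest =>
      rw [pairs_cons_cons] at h
      rcases List.mem_cons.1 h with h | h
      · obtain ⟨rfl, rfl⟩ : p = a ∧ q = b := by
          have := Prod.ext_iff.1 h; simpa [eq_comm] using this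
        simp
      · obtain ⟨ha, hb⟩ := ih h
        exact ⟨List.mem_cons_of_mem _ ha, List.mem_cons_of_mem _ hb⟩

lemma head_insertMediants (q : ℚ) (rest : List ℚ) :
    ∃ t, insertMediants (q :: rest) = q :: t := by
  cases rest with
  | nil => exact ⟨[], rfl⟩
  | cons r rs => exact ⟨_, rfl⟩

lemma mem_insertMediants {l : List ℚ} {a : ℚ} (h : a ∈ l) : a ∈ insertMediants l := by
  induction l with
  | nil => simp at h
  | cons p t ih =>
    cases t with
    | nil => simpa [insertMediants] using h
    | cons q rest =>
      rw [insertMediants]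
      rcases List.mem_cons.1 h with rfl | h
      · simp
      · simp only [List.mem_cons]
        exact Or.inr (Or.inr (ih h))

lemma pairs_insertMediants {l : List ℚ} {a b : ℚ} (h : (a, b) ∈ pairs l) :
    (a, mediant a b) ∈ pairs (insertMediants l) ∧
      (mediant a b, b) ∈ pairs (insertMediants l) := by
  induction l with
  | nil => simp [pairs] at h
  | cons p t ih =>
    cases t with
    | nil => simp [pairs] at h
    | cons q rest =>
      rw [pairs_cons_cons] at h
      obtain ⟨s, hs⟩ := head_insertMediants q rest
      rcases List.mem_cons.1 h with h | h
      · obtain ⟨rfl, rfl⟩ : p = a ∧ q = b := by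
          have := Prod.ext_iff.1 h; simpa [eq_comm] using this
        rw [insertMediants, hs, pairs_cons_cons, pairs_cons_cons]
        simp
      · obtain ⟨h1, h2⟩ := ih h
        rw [insertMediants, hs, pairs_cons_cons, pairs_cons_cons, ← hs]
        exact ⟨by simp [h1], by simp [h2]⟩

lemma pairs_insertMediants_rev {l : List ℚ} {x y : ℚ} (h : (x, y) ∈ pairs (insertMediants l)) :
    ∃ a b, (a, b) ∈ pairs l ∧
      ((x = a ∧ y = mediant a b) ∨ (x = mediant a b ∧ y = b)) := by
  induction l with
  | nil => simp [insertMediants, pairs] at h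
  | cons p t ih =>
    cases t with
    | nil => simp [insertMediants, pairs] at h
    | cons q rest =>
      obtain ⟨s, hs⟩ := head_insertMediants q rest
      rw [insertMediants, hs, pairs_cons_cons, pairs_cons_cons] at h
      rcases List.mem_cons.1 h with h | h
      · refine ⟨p, q, by simp [pairs_cons_cons], Or.inl ?_⟩
        simpa [eq_comm] using Prod.ext_iff.1 h
      rcases List.mem_cons.1 h with h | h
      · refine ⟨p, q, by simp [pairs_cons_cons], Or.inr ?_⟩
        simpa [eq_comm] using Prod.ext_iff.1 h
      · rw [← hs] at h
        obtain ⟨a, b, hab, hx⟩ := ih h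
        exact ⟨a, b, by rw [pairs_cons_cons]; exact List.mem_cons_of_mem _ hab, hx⟩

lemma mediant_num_den_s5 {a b : ℚ} (h : Adj a b) :
    (mediant a b).num = a.num + b.num ∧ ((mediant a b).den : ℤ) = (a.den : ℤ) + b.den := by
  have hd : (0 : ℤ) < (a.den : ℤ) + b.den := by positivity
  have hcop : Nat.Coprime (a.num + b.num).natAbs ((a.den : ℤ) + b.den).natAbs := by
    have : IsCoprime (a.num + b.num) ((a.den : ℤ) + b.den) := by
      refine ⟨-b.den, b.num, ?_⟩
      have := h
      unfold Adj at this
      ring_nf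
      linarith [this]
    exact Int.isCoprime_iff_gcd_eq_one.1 this
  constructor
  · have := Rat.num_div_eq_of_coprime hd hcop
    simpa [mediant, Nat.cast_add] using this
  · have := Rat.den_div_eq_of_coprime hd hcop
    simpa [mediant, Nat.cast_add] using this

lemma rat_lt_iff (a b : ℚ) : a < b ↔ a.num * b.den < b.num * a.den := by
  have ha : (0:ℚ) < (a.den : ℚ) := by exact_mod_cast a.den_pos
  have hb : (0:ℚ) < (b.den : ℚ) := by exact_mod_cast b.den_pos
  have h1 : a = (a.num : ℚ) / (a.den : ℚ) := (Rat.num_div_den a).symm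
  have h2 : b = (b.num : ℚ) / (b.den : ℚ) := (Rat.num_div_den b).symm
  constructor
  · intro h
    have h' : (a.num : ℚ) / (a.den : ℚ) < (b.num : ℚ) / (b.den : ℚ) := by
      rw [← h1, ← h2]; exact h
    rw [div_lt_div_iff₀ ha hb] at h'
    exact_mod_cast h'
  · intro h
    rw [h1, h2, div_lt_div_iff₀ ha hb]
    exact_mod_cast h

lemma adj_lt {a b : ℚ} (h : Adj a b) : a < b := by
  rw [rat_lt_iff]
  unfold Adj at h
  linarith

lemma mediant_between {a b : ℚ} (h : Adj a b) :
    a < mediant a b ∧ mediant a b < b := by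
  obtain ⟨hn, hd⟩ := mediant_num_den_s5 h
  unfold Adj at h
  constructor
  · rw [rat_lt_iff, hn, hd]
    nlinarith [a.den_pos, b.den_pos]
  · rw [rat_lt_iff, hn, hd]
    nlinarith [a.den_pos, b.den_pos]

lemma adj_mediant_left {a b : ℚ} (h : Adj a b) : Adj a (mediant a b) := by
  obtain ⟨hn, hd⟩ := mediant_num_den_s5 h
  unfold Adj at h ⊢
  rw [hn, hd]; linarith

lemma adj_mediant_right {a b : ℚ} (h : Adj a b) : Adj (mediant a b) b := by
  obtain ⟨hn, hd⟩ := mediant_num_den_s5 h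
  unfold Adj at h ⊢
  rw [hn, hd]; linarith

lemma SB_pairs_inv : ∀ i, ∀ a b : ℚ, (a, b) ∈ pairs (SB i) → Adj a b ∧ 0 ≤ a := by
  intro i
  induction i with
  | zero =>
    intro a b h
    have : (a, b) = ((0 : ℚ), (1 : ℚ)) := by
      simpa [SB, pairs] using h
    obtain ⟨rfl, rfl⟩ : a = 0 ∧ b = 1 := by
      simpa [Prod.ext_iff] using this
    refine ⟨?_, le_refl _⟩
    unfold Adj
    norm_num
  | succ i ih =>
    intro a b h
    have h' : (a, b) ∈ pairs (insertMediants (SB i)) := h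
    obtain ⟨x, y, hxy, hc⟩ := pairs_insertMediants_rev h'
    obtain ⟨hadj, hx0⟩ := ih x y hxy
    rcases hc with ⟨rfl, rfl⟩ | ⟨rfl, rfl⟩
    · exact ⟨adj_mediant_left hadj, hx0⟩
    · exact ⟨adj_mediant_right hadj, le_of_lt (lt_of_le_of_lt hx0 (mediant_between hadj).1)⟩

lemma sum_bound {a b q : ℚ} (h : Adj a b) (ha0 : 0 ≤ a) (haq : a < q) (hqb : q < b) :
    a.num + a.den + b.num + b.den ≤ q.num + q.den := by
  have hA : 1 ≤ q.num * a.den - a.num * q.den := by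
    have := (rat_lt_iff a q).1 haq; omega
  have hB : 1 ≤ b.num * q.den - q.num * b.den := by
    have := (rat_lt_iff q b).1 hqb; omega
  have han : 0 ≤ a.num := Rat.num_nonneg.2 ha0
  have hbn : 1 ≤ b.num := by
    have hb0 : 0 < b := lt_of_le_of_lt ha0 (lt_trans haq hqb)
    exact Rat.num_pos.2 hb0
  have hda : (1:ℤ) ≤ a.den := by exact_mod_cast a.den_pos
  have hdb : (1:ℤ) ≤ b.den := by exact_mod_cast b.den_pos
  have key : (a.num + a.den) * (b.num * q.den - q.num * b.den)
      + (b.num + b.den) * (q.num * a.den - a.num * q.den)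
      = (q.num + q.den) * (b.num * a.den - a.num * b.den) := by ring
  unfold Adj at h
  rw [h, mul_one] at key
  nlinarith

lemma SB_succ (i : ℕ) : SB (i + 1) = insertMediants (SB i) := rfl

lemma key_lemma (q : ℚ) : ∀ n : ℕ, ∀ i, ∀ a b : ℚ, (a, b) ∈ pairs (SB i) →
    a < q → q < b →
    (q.num + q.den - (a.num + a.den + b.num + b.den)).toNat ≤ n → ∃ j, q ∈ SB j := by
  intro n
  induction n using Nat.strong_induction_on with
  | _ n ih =>
    intro i a b hab haq hqb hn
    obtain ⟨hadj, ha0⟩ := SB_pairs_inv i a b hab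
    set m := mediant a b with hm
    obtain ⟨ham, hmb⟩ := mediant_between hadj
    obtain ⟨mn, md⟩ := mediant_num_den_s5 hadj
    obtain ⟨hL, hR⟩ := pairs_insertMediants hab
    rw [← SB_succ] at hL hR
    have han : 0 ≤ a.num := Rat.num_nonneg.2 ha0
    have hda : (1:ℤ) ≤ a.den := by exact_mod_cast a.den_pos
    have hdb : (1:ℤ) ≤ b.den := by exact_mod_cast b.den_pos
    have hbn : 1 ≤ b.num := Rat.num_pos.2 (lt_of_le_of_lt ha0 (lt_trans haq hqb))
    rcases lt_trichotomy q m with hq | hq | hq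
    · -- recurse into (a, m)
      have hadjL : Adj a m := adj_mediant_left hadj
      have hbound : a.num + a.den + m.num + m.den ≤ q.num + q.den :=
        sum_bound hadjL ha0 haq hq
      have hold : a.num + a.den + b.num + b.den ≤ q.num + q.den :=
        sum_bound hadj ha0 haq hqb
      have hlt : (q.num + q.den - (a.num + a.den + m.num + m.den)).toNat < n := by
        rw [mn] at hbound ⊢
        rw [md] at hbound ⊢
        omega
      exact ih _ hlt (i + 1) a m hL haq hq le_rfl
    · exact ⟨i + 1, hq ▸ (mem_of_pairs hL).2⟩
    · -- recurse into (m, b)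
      have hadjR : Adj m b := adj_mediant_right hadj
      have hm0 : 0 ≤ m := le_of_lt (lt_of_le_of_lt ha0 ham)
      have hbound : m.num + m.den + b.num + b.den ≤ q.num + q.den :=
        sum_bound hadjR hm0 hq hqb
      have hold : a.num + a.den + b.num + b.den ≤ q.num + q.den :=
        sum_bound hadj ha0 haq hqb
      have hlt : (q.num + q.den - (m.num + m.den + b.num + b.den)).toNat < n := by
        rw [mn] at hbound ⊢
        rw [md] at hbound ⊢
        omega
      exact ih _ hlt (i + 1) m b hR hq hqb le_rfl

/-- Every rational number `q` with `0 ≤ q ≤ 1` appears in some Stern-Brocot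
half-sequence. -/
theorem sternBrocot_mem_of_mem_unitInterval (q : ℚ) (h0 : 0 ≤ q) (h1 : q ≤ 1) :
    ∃ i, q ∈ SB i := by
  rcases eq_or_lt_of_le h0 with rfl | h0'
  · exact ⟨0, by simp [SB]⟩
  rcases eq_or_lt_of_le h1 with rfl | h1'
  · exact ⟨0, by simp [SB]⟩
  have hpair : ((0 : ℚ), (1 : ℚ)) ∈ pairs (SB 0) := by simp [SB, pairs]
  exact key_lemma q _ 0 0 1 hpair h0' h1' le_rfl
end

section
/- Let a, b, c, d be nonnegative integers with b, d positive, gcd(a,b) = 1, gcd(c,d) = 1, and D = bc − ad > 0. Then there exists a positive integer V such that for all positive coprime integers x and y, gcd(a·x + c·y, b·x + d·y) = gcd(D·y, x + V·y). -/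
/-- If `a/b` and `c/d` are in lowest terms with cross-determinant `D = bc - ad > 0`,
there is a positive integer `V` such that for all positive coprime `x, y`,
`gcd (ax + cy) (bx + dy) = gcd (Dy) (x + Vy)`. -/
theorem exists_V_gcd_eq (a b c d : ℕ) (hb : 0 < b) (hd : 0 < d)
    (hab : Nat.gcd a b = 1) (hcd : Nat.gcd c d = 1) (hD : a * d < b * c) :
    ∃ V : ℕ, 0 < V ∧ ∀ x y : ℕ, 0 < x → 0 < y → Nat.gcd x y = 1 →
      Nat.gcd (a * x + c * y) (b * x + d * y) =
        Nat.gcd ((b * c - a * d) * y) (x + V * y) := by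
  set Dn : ℕ := b * c - a * d with hDn
  have hDpos : 0 < Dn := Nat.sub_pos_of_lt hD
  have hDcast : (Dn : ℤ) = (b:ℤ) * c - (a:ℤ) * d := by
    rw [hDn, Nat.cast_sub hD.le]; push_cast; ring
  obtain ⟨r, s, hrs⟩ : ∃ r s : ℤ, r * a + s * b = 1 := by
    refine ⟨Nat.gcdA a b, Nat.gcdB a b, ?_⟩
    have h := Nat.gcd_eq_gcd_ab a b
    rw [hab] at h; push_cast at h ⊢; linarith
  set V0 : ℤ := r * c + s * d with hV0
  have hDZpos : (0:ℤ) < (Dn:ℤ) := by exact_mod_cast hDpos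
  have hmodnn : 0 ≤ V0 % (Dn:ℤ) := Int.emod_nonneg V0 (ne_of_gt hDZpos)
  set V : ℕ := (V0 % (Dn:ℤ) + Dn).toNat with hV
  have hVZ : (V : ℤ) = V0 % (Dn:ℤ) + Dn := by
    rw [hV, Int.toNat_of_nonneg]; linarith
  have hVpos : 0 < V := by
    have h0 : (0:ℤ) < (V:ℤ) := by rw [hVZ]; linarith
    exact_mod_cast h0
  have hdvdV0 : (Dn:ℤ) ∣ (V:ℤ) - V0 :=
    ⟨1 - V0 / Dn, by rw [hVZ, Int.emod_def]; ring⟩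
  obtain ⟨t, ht⟩ := hdvdV0
  -- key congruences
  have hka : (a:ℤ) * V - c = (Dn:ℤ) * ((a:ℤ) * t - s) := by
    have : (V:ℤ) = V0 + Dn * t := by linarith
    rw [this, hV0]
    linear_combination (c:ℤ) * hrs + s * hDcast
  have hkb : (b:ℤ) * V - d = (Dn:ℤ) * ((b:ℤ) * t + r) := by
    have : (V:ℤ) = V0 + Dn * t := by linarith
    rw [this, hV0]
    linear_combination (d:ℤ) * hrs - r * hDcast
  refine ⟨V, hVpos, fun x y hx hy hxy => ?_⟩
  apply Nat.dvd_antisymm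
  · set g : ℕ := Nat.gcd (a * x + c * y) (b * x + d * y) with hg
    have hg1 : (g:ℤ) ∣ (a:ℤ) * x + c * y := by
      have := Nat.gcd_dvd_left (a * x + c * y) (b * x + d * y)
      exact_mod_cast this
    have hg2 : (g:ℤ) ∣ (b:ℤ) * x + d * y := by
      have := Nat.gcd_dvd_right (a * x + c * y) (b * x + d * y)
      exact_mod_cast this
    have hgDy : (g:ℤ) ∣ (Dn:ℤ) * y := by
      have : (Dn:ℤ) * y = (b:ℤ) * ((a:ℤ) * x + c * y) - (a:ℤ) * ((b:ℤ) * x + d * y) := by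
        rw [hDcast]; ring
      rw [this]
      exact dvd_sub (Dvd.dvd.mul_left hg1 _) (Dvd.dvd.mul_left hg2 _)
    have hgam : (g:ℤ) ∣ (a:ℤ) * ((x:ℤ) + V * y) := by
      have : (a:ℤ) * ((x:ℤ) + V * y) = ((a:ℤ) * x + c * y) + ((a:ℤ) * t - s) * ((Dn:ℤ) * y) := by
        linear_combination (y:ℤ) * hka
      rw [this]
      exact dvd_add hg1 (Dvd.dvd.mul_left hgDy _)
    have hgbm : (g:ℤ) ∣ (b:ℤ) * ((x:ℤ) + V * y) := by
      have : (b:ℤ) * ((x:ℤ) + V * y) = ((b:ℤ) * x + d * y) + ((b:ℤ) * t + r) * ((Dn:ℤ) * y) := by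
        linear_combination (y:ℤ) * hkb
      rw [this]
      exact dvd_add hg2 (Dvd.dvd.mul_left hgDy _)
    have hgm : (g:ℤ) ∣ (x:ℤ) + V * y := by
      have : (x:ℤ) + V * y = r * ((a:ℤ) * ((x:ℤ) + V * y)) + s * ((b:ℤ) * ((x:ℤ) + V * y)) := by
        linear_combination (-((x:ℤ) + V * y)) * hrs
      rw [this]
      exact dvd_add (Dvd.dvd.mul_left hgam _) (Dvd.dvd.mul_left hgbm _)
    apply Nat.dvd_gcd
    · have : (g:ℤ) ∣ ((Dn * y : ℕ) : ℤ) := by push_cast; exact hgDy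
      exact_mod_cast this
    · have : (g:ℤ) ∣ ((x + V * y : ℕ) : ℤ) := by push_cast; exact hgm
      exact_mod_cast this
  · set h : ℕ := Nat.gcd (Dn * y) (x + V * y) with hh
    have hh1 : (h:ℤ) ∣ (Dn:ℤ) * y := by
      have := Nat.gcd_dvd_left (Dn * y) (x + V * y)
      have h2 : (h:ℤ) ∣ ((Dn * y : ℕ):ℤ) := by exact_mod_cast this
      push_cast at h2; exact h2
    have hh2 : (h:ℤ) ∣ (x:ℤ) + V * y := by
      have := Nat.gcd_dvd_right (Dn * y) (x + V * y)
      have h2 : (h:ℤ) ∣ ((x + V * y : ℕ):ℤ) := by exact_mod_cast this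
      push_cast at h2; exact h2
    have hu : (h:ℤ) ∣ (a:ℤ) * x + c * y := by
      have : (a:ℤ) * x + c * y = (a:ℤ) * ((x:ℤ) + V * y) - ((a:ℤ) * t - s) * ((Dn:ℤ) * y) := by
        linear_combination (-(y:ℤ)) * hka
      rw [this]
      exact dvd_sub (Dvd.dvd.mul_left hh2 _) (Dvd.dvd.mul_left hh1 _)
    have hv : (h:ℤ) ∣ (b:ℤ) * x + d * y := by
      have : (b:ℤ) * x + d * y = (b:ℤ) * ((x:ℤ) + V * y) - ((b:ℤ) * t + r) * ((Dn:ℤ) * y) := by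
        linear_combination (-(y:ℤ)) * hkb
      rw [this]
      exact dvd_sub (Dvd.dvd.mul_left hh2 _) (Dvd.dvd.mul_left hh1 _)
    apply Nat.dvd_gcd
    · have : (h:ℤ) ∣ ((a * x + c * y : ℕ):ℤ) := by push_cast; exact hu
      exact_mod_cast this
    · have : (h:ℤ) ∣ ((b * x + d * y : ℕ):ℤ) := by push_cast; exact hv
      exact_mod_cast this
end
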